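/- The function h(c) = ∫₀^c e^{−x(2c−x)} dx, for c > 0, satisfies h(c) ≤ 1/π^{1/2} for all c > 0. -/

import Mathlib

open Real intervalIntegral MeasureTheory

private lemma Fderiv' (c : ℝ) :
    HasDerivAt (fun u => ∫ t in (0:ℝ)..u, Real.exp (t^2)) (Real.exp (c^2)) c := by
  have hcont : Continuous fun t : ℝ => Real.exp (t^2) := by continuity
  exact intervalIntegral.integral_hasDerivAt_right (hcont.intervalIntegrable _ _)
    hcont.aestronglyMeasurable.stronglyMeasurableAtFilter hcont.continuousAt

private lemma poly_num' : Real.pi/2 + Real.pi^2/24 + Real.pi^3/320 + Real.pi^4/5376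
    + 5*Real.pi^5/442368 ≤ Real.exp (Real.pi/4) := by
  have hexp : 1 + Real.pi/4 + (Real.pi/4)^2/2 + (Real.pi/4)^3/6 ≤ Real.exp (Real.pi/4) := by
    have := Real.sum_le_exp_of_nonneg (by positivity : (0:ℝ) ≤ Real.pi/4) 4
    simp [Finset.sum_range_succ, Nat.factorial] at this
    nlinarith [this]
  have h1 : Real.pi < 3.15 := by linarith [Real.pi_lt_d2]
  have h0 : 3.141592 < Real.pi := Real.pi_gt_d6
  have hp2u : Real.pi^2 < 9.9225 := by nlinarith
  have hp2l : 9.8696 < Real.pi^2 := by nlinarith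
  have hp3u : Real.pi^3 < 31.26 := by nlinarith
  have hp3l : 31.006 < Real.pi^3 := by nlinarith
  have hp4u : Real.pi^4 < 98.5 := by nlinarith
  have hp5u : Real.pi^5 < 310.3 := by nlinarith
  nlinarith [hexp]

private lemma Fa_bound' : (∫ t in (0:ℝ)..(Real.sqrt Real.pi/2), Real.exp (t^2))
    ≤ Real.exp (Real.pi/4) / Real.sqrt Real.pi := by
  have hs0 : 0 < Real.sqrt Real.pi := Real.sqrt_pos.mpr Real.pi_pos
  set a : ℝ := Real.sqrt Real.pi/2 with hadef
  have ha0 : 0 < a := by positivity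
  have ha2 : a^2 = Real.pi/4 := by
    rw [hadef, div_pow, Real.sq_sqrt Real.pi_pos.le]; norm_num
  have ha1 : a ≤ 1 := by
    nlinarith [ha2, Real.pi_lt_d2, ha0.le]
  have hpoint : ∀ t ∈ Set.Icc (0:ℝ) a,
      Real.exp (t^2) ≤ 1 + t^2 + t^4/2 + t^6/6 + 5*t^8/96 := by
    intro t ht
    obtain ⟨ht0, hta⟩ := ht
    have hx0 : (0:ℝ) ≤ t^2 := sq_nonneg t
    have hx1 : t^2 ≤ 1 := by nlinarith
    have := Real.exp_bound' hx0 hx1 (n := 4) (by norm_num)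
    simp [Finset.sum_range_succ, Nat.factorial] at this
    nlinarith [this]
  have hcont : Continuous fun t : ℝ => Real.exp (t^2) := by continuity
  have hcont2 : Continuous fun t : ℝ => 1 + t^2 + t^4/2 + t^6/6 + 5*t^8/96 := by continuity
  have hmono : (∫ t in (0:ℝ)..a, Real.exp (t^2))
      ≤ ∫ t in (0:ℝ)..a, (1 + t^2 + t^4/2 + t^6/6 + 5*t^8/96) :=
    intervalIntegral.integral_mono_on ha0.le
      (hcont.intervalIntegrable _ _) (hcont2.intervalIntegrable _ _) hpoint
  have hcalc : (∫ t in (0:ℝ)..a, (1 + t^2 + t^4/2 + t^6/6 + 5*t^8/96))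
      = a + a^3/3 + a^5/10 + a^7/42 + 5*a^9/864 := by
    have hd : ∀ t ∈ Set.uIcc (0:ℝ) a, HasDerivAt
        (fun t : ℝ => t + t^3/3 + t^5/10 + t^7/42 + 5*t^9/864)
        (1 + t^2 + t^4/2 + t^6/6 + 5*t^8/96) t := by
      intro t _
      have := ((((hasDerivAt_id t).add (((hasDerivAt_pow 3 t).div_const 3))).add
        ((hasDerivAt_pow 5 t).div_const 10)).add
        ((hasDerivAt_pow 7 t).div_const 42)).add
        (((hasDerivAt_pow 9 t).const_mul 5).div_const 864)
      refine this.congr_deriv ?_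
      push_cast
      ring
    rw [intervalIntegral.integral_eq_sub_of_hasDerivAt hd (hcont2.intervalIntegrable _ _)]
    norm_num
  have hfin : a + a^3/3 + a^5/10 + a^7/42 + 5*a^9/864 ≤ Real.exp (Real.pi/4) / Real.sqrt Real.pi := by
    rw [le_div_iff₀ hs0]
    have hsa : Real.sqrt Real.pi = 2*a := by rw [hadef]; ring
    rw [hsa]
    have hring : (a + a^3/3 + a^5/10 + a^7/42 + 5*a^9/864) * (2*a)
        = 2*a^2 + 2*(a^2)^2/3 + (a^2)^3/5 + (a^2)^4/21 + 5*(a^2)^5/432 := by ring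
    rw [hring, ha2]
    have := poly_num'
    nlinarith [this]
  calc (∫ t in (0:ℝ)..a, Real.exp (t^2))
      ≤ a + a^3/3 + a^5/10 + a^7/42 + 5*a^9/864 := by rw [← hcalc]; exact hmono
    _ ≤ Real.exp (Real.pi/4) / Real.sqrt Real.pi := hfin

private lemma key' (c : ℝ) :
    (∫ t in (0:ℝ)..c, Real.exp (t^2)) ≤ Real.exp (c^2) / Real.sqrt Real.pi := by
  have hnum := Fa_bound'
  have hs0 : 0 < Real.sqrt Real.pi := Real.sqrt_pos.mpr Real.pi_pos
  set s := Real.sqrt Real.pi with hsdef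
  have hs2 : s^2 = Real.pi := Real.sq_sqrt Real.pi_pos.le
  set a : ℝ := s/2 with hadef
  have ha2 : a^2 = Real.pi/4 := by rw [hadef, div_pow, hs2]; norm_num
  set φ : ℝ → ℝ := fun u => Real.exp (u^2)/s - ∫ t in (0:ℝ)..u, Real.exp (t^2) with hφdef
  have hder : ∀ u : ℝ, HasDerivAt φ (Real.exp (u^2) * (2*u) / s - Real.exp (u^2)) u := by
    intro u
    have h1 : HasDerivAt (fun v : ℝ => v^2) (2*u) u := by
      simpa using hasDerivAt_pow 2 u
    exact ((h1.exp).div_const s).sub (Fderiv' u)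
  have hdiff : Differentiable ℝ φ := fun u => (hder u).differentiableAt
  have hderiv : ∀ u, deriv φ u = Real.exp (u^2) * (2*u)/s - Real.exp (u^2) :=
    fun u => (hder u).deriv
  have hanti : AntitoneOn φ (Set.Iic a) := by
    apply antitoneOn_of_deriv_nonpos (convex_Iic a) hdiff.continuous.continuousOn
      (fun u _ => (hdiff u).differentiableWithinAt)
    intro u hu
    rw [interior_Iic] at hu
    rw [hderiv, sub_nonpos, div_le_iff₀ hs0]
    have h2u : 2*u < s := by
      have : u < a := hu
      rw [hadef] at this; linarith
    nlinarith [Real.exp_pos (u^2), h2u]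
  have hmono : MonotoneOn φ (Set.Ici a) := by
    apply monotoneOn_of_deriv_nonneg (convex_Ici a) hdiff.continuous.continuousOn
      (fun u _ => (hdiff u).differentiableWithinAt)
    intro u hu
    rw [interior_Ici] at hu
    rw [hderiv, sub_nonneg, le_div_iff₀ hs0]
    have h2u : s ≤ 2*u := by
      have : a < u := hu
      rw [hadef] at this; linarith
    nlinarith [Real.exp_pos (u^2), h2u]
  have hmin : φ a ≤ φ c := by
    rcases le_total c a with h | h
    · exact hanti (Set.mem_Iic.mpr h) (Set.mem_Iic.mpr le_rfl) h
    · exact hmono (Set.mem_Ici.mpr le_rfl) (Set.mem_Ici.mpr h) h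
  have hφa : 0 ≤ φ a := by
    have he : Real.exp (a^2) = Real.exp (Real.pi/4) := by rw [ha2]
    simp only [hφdef, he, sub_nonneg]
    exact hnum
  have := le_trans hφa hmin
  simp only [hφdef, sub_nonneg] at this
  exact this

theorem integral_exp_neg_le (c : ℝ) (hc : 0 < c) :
    (∫ x in (0:ℝ)..c, Real.exp (-(x * (2 * c - x)))) ≤ 1 / Real.sqrt Real.pi := by
  have h1 : ∀ x : ℝ, Real.exp (-(x * (2 * c - x))) = Real.exp (-c^2) * Real.exp ((c - x)^2) := by
    intro x; rw [← Real.exp_add]; ring_nf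
  have h2 : (∫ x in (0:ℝ)..c, Real.exp (-(x * (2 * c - x))))
      = Real.exp (-c^2) * ∫ t in (0:ℝ)..c, Real.exp (t^2) := by
    simp_rw [h1]
    rw [intervalIntegral.integral_const_mul]
    congr 1
    have := intervalIntegral.integral_comp_sub_left (fun t : ℝ => Real.exp (t^2)) c (a := 0) (b := c)
    simpa using this
  rw [h2]
  have hk := key' c
  have hpos : 0 < Real.exp (-c^2) := Real.exp_pos _
  calc Real.exp (-c^2) * ∫ t in (0:ℝ)..c, Real.exp (t^2)
      ≤ Real.exp (-c^2) * (Real.exp (c^2) / Real.sqrt Real.pi) :=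
        mul_le_mul_of_nonneg_left hk hpos.le
    _ = 1 / Real.sqrt Real.pi := by
        rw [← mul_div_assoc, ← Real.exp_add]
        norm_num
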